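/- For any string s, the size of the novLZ3 parsing of s is less than or equal to the size of any novLZ3-type parsing of s. -/

import Mathlib

attribute [local instance] Classical.propDecidable

/-- `PermOv s i ℓ` : the substring of `s` of length `ℓ` starting at 0-indexed position `i`
has an occurrence starting at some earlier position `j < i` (possibly overlapping it). -/
def PermOv {α : Type*} (s : List α) (i ℓ : ℕ) : Prop :=
  ∃ j < i, (s.drop j).take ℓ = (s.drop i).take ℓ

/-- `PermNov s i ℓ` : the substring of `s` of length `ℓ` starting at 0-indexed position `i`
has an occurrence starting at some position `j` with `j + ℓ ≤ i` (not overlapping it). -/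
def PermNov {α : Type*} (s : List α) (i ℓ : ℕ) : Prop :=
  ∃ j, j + ℓ ≤ i ∧ (s.drop j).take ℓ = (s.drop i).take ℓ

/-- `PermOv3 s i ℓ` : the substring of `s` of length `ℓ - 1` starting at 0-indexed position `i`
(i.e. the phrase of length `ℓ` starting at `i` minus its last letter) has an occurrence
starting at some earlier position `j < i` (possibly overlapping). -/
def PermOv3 {α : Type*} (s : List α) (i ℓ : ℕ) : Prop :=
  ∃ j < i, (s.drop j).take (ℓ - 1) = (s.drop i).take (ℓ - 1)

/-- `PermNov3 s i ℓ` : the substring of `s` of length `ℓ - 1` starting at 0-indexed position `i`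
has an occurrence starting at some position `j` with `j + (ℓ - 1) ≤ i` (so this occurrence
ends before position `i`). -/
def PermNov3 {α : Type*} (s : List α) (i ℓ : ℕ) : Prop :=
  ∃ j, j + (ℓ - 1) ≤ i ∧ (s.drop j).take (ℓ - 1) = (s.drop i).take (ℓ - 1)

/-- Length of the greedy phrase starting at 0-indexed position `i`: the largest
`ℓ ≤ |s| - i` permitted by `P`, or `1` (a single letter) if no length is permitted. -/
noncomputable def phraseLen {α : Type*} (P : List α → ℕ → ℕ → Prop) (s : List α) (i : ℕ) : ℕ :=
  max 1 (Nat.findGreatest (fun ℓ => P s i ℓ) (s.length - i))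

/-- The list of phrases of the greedy parsing (w.r.t. the permission predicate `P`)
of the suffix of `s` starting at 0-indexed position `i`. -/
noncomputable def phrasesFrom {α : Type*} (P : List α → ℕ → ℕ → Prop) (s : List α) (i : ℕ) :
    List (List α) :=
  if _h : i < s.length then
    (s.drop i).take (phraseLen P s i) :: phrasesFrom P s (i + phraseLen P s i)
  else []
  termination_by s.length - i
  decreasing_by
    have h1 : 1 ≤ phraseLen P s i := by unfold phraseLen; exact Nat.le_max_left _ _
    omega

/-- The LZ parsing of `s` (phrases may overlap their earlier occurrences). -/
noncomputable def lzPhrases {α : Type*} (s : List α) : List (List α) := phrasesFrom PermOv s 0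
/-- The novLZ parsing of `s` (earlier occurrences may not overlap the phrases). -/
noncomputable def novlzPhrases {α : Type*} (s : List α) : List (List α) := phrasesFrom PermNov s 0
/-- The LZ3 parsing of `s`. -/
noncomputable def lz3Phrases {α : Type*} (s : List α) : List (List α) := phrasesFrom PermOv3 s 0
/-- The novLZ3 parsing of `s`. -/
noncomputable def novlz3Phrases {α : Type*} (s : List α) : List (List α) := phrasesFrom PermNov3 s 0

/-- `Zov`: the size (number of phrases) of the LZ parsing of `s`. -/
noncomputable def zOv {α : Type*} (s : List α) : ℕ := (lzPhrases s).length
/-- `Znon`: the size of the novLZ parsing of `s`. -/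
noncomputable def zNov {α : Type*} (s : List α) : ℕ := (novlzPhrases s).length
/-- `Zov₃`: the size of the LZ3 parsing of `s`. -/
noncomputable def zOv3 {α : Type*} (s : List α) : ℕ := (lz3Phrases s).length
/-- `Znon₃`: the size of the novLZ3 parsing of `s`. -/
noncomputable def zNov3 {α : Type*} (s : List α) : ℕ := (novlz3Phrases s).length

/-- `ts` is an LZ-type parsing of `s`: a decomposition of `s` into nonempty strings such that
each `tᵢ` is a single letter or occurs in `s[1..|t₁⋯tᵢ|-1]`. -/
def IsLZTypeParsing {α : Type*} (s : List α) (ts : List (List α)) : Prop :=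
  ts.flatten = s ∧ (∀ t ∈ ts, t ≠ []) ∧
    ∀ i (h : i < ts.length),
      ts[i].length = 1 ∨ ts[i] <:+: s.take ((ts.take (i + 1)).flatten.length - 1)

/-- `ts` is a novLZ-type parsing of `s`: a decomposition of `s` into nonempty strings such that
each `tᵢ` is a single letter or occurs in `t₁⋯tᵢ₋₁`. -/
def IsNovLZTypeParsing {α : Type*} (s : List α) (ts : List (List α)) : Prop :=
  ts.flatten = s ∧ (∀ t ∈ ts, t ≠ []) ∧
    ∀ i (h : i < ts.length),
      ts[i].length = 1 ∨ ts[i] <:+: (ts.take i).flatten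

/-- `ts` is an LZ3-type parsing of `s`: a decomposition of `s` into nonempty strings such that
each `tᵢ` minus its last letter occurs in `s[1..|t₁⋯tᵢ|-2]`. -/
def IsLZ3TypeParsing {α : Type*} (s : List α) (ts : List (List α)) : Prop :=
  ts.flatten = s ∧ (∀ t ∈ ts, t ≠ []) ∧
    ∀ i (h : i < ts.length),
      ts[i].dropLast <:+: s.take ((ts.take (i + 1)).flatten.length - 2)

/-- `ts` is a novLZ3-type parsing of `s`: a decomposition of `s` into nonempty strings such that
each `tᵢ` minus its last letter occurs in `t₁⋯tᵢ₋₁`. -/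
def IsNovLZ3TypeParsing {α : Type*} (s : List α) (ts : List (List α)) : Prop :=
  ts.flatten = s ∧ (∀ t ∈ ts, t ≠ []) ∧
    ∀ i (h : i < ts.length),
      ts[i].dropLast <:+: (ts.take i).flatten

/-- The novLZ3 parsing of any string `s` has the least size among all novLZ3-type parsings
of `s`. -/
lemma permNov3_trivial {α : Type*} (s : List α) (i : ℕ) {ℓ : ℕ} (h : ℓ ≤ 1) :
    PermNov3 s i ℓ := by
  have h0 : ℓ - 1 = 0 := by omega
  exact ⟨0, by simp [h0], by simp [h0]⟩

lemma permNov3_shift {α : Type*} {s : List α} {i ℓ : ℕ} (h : PermNov3 s i ℓ) {i' : ℕ}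
    (hi : i ≤ i') : PermNov3 s i' (i + ℓ - i') := by
  by_cases h1 : i + ℓ - i' ≤ 1
  · exact permNov3_trivial s i' h1
  obtain ⟨j, hj, heq⟩ := h
  refine ⟨j + (i' - i), by omega, ?_⟩
  have := congrArg (List.drop (i' - i)) heq
  rw [List.drop_take, List.drop_take, List.drop_drop, List.drop_drop] at this
  have e1 : ℓ - 1 - (i' - i) = i + ℓ - i' - 1 := by omega
  have e2 : i + (i' - i) = i' := by omega
  rwa [e1, e2] at this

lemma phraseLen_ge {α : Type*} {s : List α} {i ℓ : ℕ} (h : PermNov3 s i ℓ)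
    (hle : ℓ ≤ s.length - i) : ℓ ≤ phraseLen PermNov3 s i :=
  le_trans (Nat.le_findGreatest hle h) (Nat.le_max_right _ _)

lemma main_lemma {α : Type*} (s : List α) : ∀ (ls : List ℕ) (p g : ℕ), p ≤ g →
    p + ls.sum = s.length →
    (∀ k (hk : k < ls.length), 1 ≤ ls.get ⟨k, hk⟩ ∧
      PermNov3 s (p + (ls.take k).sum) (ls.get ⟨k, hk⟩)) →
    (phrasesFrom PermNov3 s g).length ≤ ls.length := by
  intro ls
  induction ls with
  | nil =>
    intro p g hpg hsum _
    rw [phrasesFrom]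
    simp at hsum
    rw [dif_neg (by omega)]
    simp
  | cons ℓ ls' ih =>
    intro p g hpg hsum hperm
    by_cases hg : g < s.length
    · have h0 := hperm 0 (by simp)
      simp at h0
      have hsum' : ℓ + ls'.sum = s.length - p := by simp at hsum; omega
      have hperm' : ∀ k (hk : k < ls'.length), 1 ≤ ls'.get ⟨k, hk⟩ ∧
          PermNov3 s (p + ℓ + (ls'.take k).sum) (ls'.get ⟨k, hk⟩) := by
        intro k hk
        have := hperm (k + 1) (by simp; omega)
        simpa [List.take_succ_cons, Nat.add_assoc] using this
      by_cases hcase : p + ℓ ≤ g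
      · have := ih (p + ℓ) g hcase (by simp at hsum ⊢; omega) hperm'
        simp only [List.length_cons]
        omega
      · -- g < p + ℓ
        have hshift := permNov3_shift h0.2 hpg
        have hlen : p + ℓ - g ≤ s.length - g := by simp at hsum; omega
        have hL : p + ℓ - g ≤ phraseLen PermNov3 s g := phraseLen_ge hshift hlen
        rw [phrasesFrom, dif_pos hg]
        simp only [List.length_cons, Nat.add_le_add_iff_right]
        exact ih (p + ℓ) (g + phraseLen PermNov3 s g) (by omega)
          (by simp at hsum ⊢; omega) hperm'
    · rw [phrasesFrom, dif_neg hg]; simp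

theorem novlz3_optimal {α : Type*} (s : List α) (ts : List (List α))
    (h : IsNovLZ3TypeParsing s ts) : zNov3 s ≤ ts.length := by
  obtain ⟨hflat, hne, hinf⟩ := h
  have hlen : zNov3 s = (phrasesFrom PermNov3 s 0).length := rfl
  rw [hlen]
  have := main_lemma s (ts.map List.length) 0 0 le_rfl ?_ ?_
  · simpa using this
  · simp [← hflat, List.length_flatten]
  · intro k hk
    simp only [List.length_map] at hk
    have hget : (ts.map List.length).get ⟨k, by simpa⟩ = ts[k].length := by simp
    rw [hget]
    have hpos : 1 ≤ ts[k].length :=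
      List.length_pos_iff.mpr (hne _ (List.getElem_mem hk))
    refine ⟨hpos, ?_⟩
    set ℓ := ts[k].length with hℓ
    have hsumtake : (List.take k (ts.map List.length)).sum = ((ts.take k).flatten).length := by
      rw [← List.map_take, List.length_flatten]
    rw [Nat.zero_add, hsumtake]
    set pk := ((ts.take k).flatten).length with hpk
    have hs : s = (ts.take k).flatten ++ (ts.drop k).flatten := by
      rw [← List.flatten_append, List.take_append_drop, hflat]
    have hdropk : ts.drop k = ts[k] :: ts.drop (k + 1) := List.drop_eq_getElem_cons hk
    have hdrop_pk : s.drop pk = ts[k] ++ (ts.drop (k + 1)).flatten := by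
      rw [hs, hpk, List.drop_left, hdropk, List.flatten_cons]
    obtain ⟨u, v, huv⟩ := hinf k hk
    refine ⟨u.length, ?_, ?_⟩
    · have := congrArg List.length huv
      simp [List.length_dropLast] at this
      omega
    · have hsu : s = u ++ (ts[k].dropLast ++ (v ++ (ts.drop k).flatten)) := by
        rw [hs, ← huv]; simp
      have hL : (s.drop u.length).take (ℓ - 1) = ts[k].dropLast := by
        rw [hsu, List.drop_left]
        exact List.take_left' (by simp [List.length_dropLast, hℓ])
      have hR : (s.drop pk).take (ℓ - 1) = ts[k].dropLast := by
        rw [hdrop_pk, List.take_append_of_le_length (by omega),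
          List.dropLast_eq_take]
      rw [hL, hR]
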